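/- (Vector-valued Hoeffding/McDiarmid-type bound, Shawe-Taylor–Cristianini) Let ζ₁,…,ζ_M be i.i.d. random vectors in ℝ^N with E[ζ] = 0, E[ζζᵀ] = I, and ‖ζ‖₂² ≤ R² almost surely. Then for any δ ∈ (0,1), with probability at least 1 − δ, ‖(1/M)∑_{i=1}^M ζ_i‖₂² ≤ (R²/M)(2 + √(2 log(1/δ)))². -/

import Mathlib

open MeasureTheory ProbabilityTheory Real

/-- Two point Hoeffding inequality. -/
lemma two_point_ineq (p u : ℝ) (hp0 : 0 ≤ p) (hp1 : p ≤ 1) (hu : 0 ≤ u) :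
    p * rexp u + (1 - p) * rexp (-u) ≤ rexp ((2 * p - 1) * u + u ^ 2 / 2) := by
  set f : ℝ → ℝ := fun v => p * rexp v + (1 - p) * rexp (-v) with hf_def
  set d : ℝ → ℝ := fun v => p * rexp v - (1 - p) * rexp (-v) with hd_def
  have hfpos : ∀ v, 0 < f v := by
    intro v
    have h1 : 0 < min (rexp v) (rexp (-v)) := lt_min (exp_pos _) (exp_pos _)
    have h2 : p * min (rexp v) (rexp (-v)) ≤ p * rexp v :=
      mul_le_mul_of_nonneg_left (min_le_left _ _) hp0
    have h3 : (1 - p) * min (rexp v) (rexp (-v)) ≤ (1 - p) * rexp (-v) :=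
      mul_le_mul_of_nonneg_left (min_le_right _ _) (by linarith)
    have : min (rexp v) (rexp (-v)) = p * min (rexp v) (rexp (-v)) + (1 - p) * min (rexp v) (rexp (-v)) := by ring
    simp only [hf_def]
    nlinarith
  have hfd : ∀ v, HasDerivAt f (d v) v := by
    intro v
    have h1 : HasDerivAt (fun v : ℝ => p * rexp v) (p * rexp v) v :=
      (Real.hasDerivAt_exp v).const_mul p
    have h2 : HasDerivAt (fun v : ℝ => rexp (-v)) (-rexp (-v)) v := by
      simpa [Function.comp_def] using (Real.hasDerivAt_exp (-v)).comp v (hasDerivAt_neg v)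
    have h3 : HasDerivAt (fun v : ℝ => (1 - p) * rexp (-v)) ((1 - p) * (-rexp (-v))) v :=
      h2.const_mul (1 - p)
    simpa [hd_def, hf_def, mul_comm, mul_neg, sub_eq_add_neg] using h1.fun_add h3
  have hdd : ∀ v, HasDerivAt d (f v) v := by
    intro v
    have h1 : HasDerivAt (fun v : ℝ => p * rexp v) (p * rexp v) v :=
      (Real.hasDerivAt_exp v).const_mul p
    have h2 : HasDerivAt (fun v : ℝ => rexp (-v)) (-rexp (-v)) v := by
      simpa [Function.comp_def] using (Real.hasDerivAt_exp (-v)).comp v (hasDerivAt_neg v)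
    have h3 : HasDerivAt (fun v : ℝ => (1 - p) * rexp (-v)) ((1 - p) * (-rexp (-v))) v :=
      h2.const_mul (1 - p)
    simpa [hd_def, hf_def, mul_neg] using h1.fun_sub h3
  set q : ℝ → ℝ := fun v => d v / f v with hq_def
  have key_alg : ∀ F D : ℝ, F ≠ 0 → (F * F - D * D) / F ^ 2 = 1 - (D / F) ^ 2 := by
    intro F D hF
    field_simp
  have hqd : ∀ v, HasDerivAt q (1 - (q v) ^ 2) v := by
    intro v
    have h := (hdd v).div (hfd v) (hfpos v).ne'
    have heq : (f v * f v - d v * d v) / f v ^ 2 = 1 - q v ^ 2 :=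
      key_alg (f v) (d v) (hfpos v).ne'
    exact heq ▸ h
  -- q v ≤ q 0 + v for v ≥ 0
  have hmono1 : Monotone (fun v => v - q v) := by
    apply monotone_of_deriv_nonneg
    · intro v
      have hd : HasDerivAt (fun w => w - q w) (1 - (1 - q v ^ 2)) v :=
        (hasDerivAt_id v).sub (hqd v)
      exact hd.differentiableAt
    · intro v
      have hd : HasDerivAt (fun w => w - q w) (1 - (1 - q v ^ 2)) v :=
        (hasDerivAt_id v).sub (hqd v)
      rw [hd.deriv]
      nlinarith [sq_nonneg (q v)]
  have hq_le : ∀ v, 0 ≤ v → q v ≤ q 0 + v := by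
    intro v hv
    have := hmono1 hv
    simp only at this
    linarith
  have hq0 : q 0 = 2 * p - 1 := by
    simp [hq_def, hd_def, hf_def]
    ring
  -- g₂ = (2p-1)v + v²/2 - log (f v) is monotone on [0, ∞)
  set g : ℝ → ℝ := fun v => (2 * p - 1) * v + v ^ 2 / 2 - Real.log (f v) with hg_def
  have hgd : ∀ v, HasDerivAt g ((2 * p - 1) + v - q v) v := by
    intro v
    have hlog : HasDerivAt (fun v => Real.log (f v)) (d v / f v) v := by
      simpa using (hfd v).log (hfpos v).ne'
    have h1 : HasDerivAt (fun v : ℝ => (2 * p - 1) * v) (2 * p - 1) v := by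
      simpa using (hasDerivAt_id v).const_mul (2 * p - 1)
    have h2 : HasDerivAt (fun v : ℝ => v ^ 2 / 2) v v := by
      simpa using ((hasDerivAt_pow 2 v).div_const 2)
    simpa [hq_def] using (h1.fun_add h2).fun_sub hlog
  have hgmono : MonotoneOn g (Set.Ici (0 : ℝ)) := by
    apply monotoneOn_of_deriv_nonneg (convex_Ici 0)
    · exact Continuous.continuousOn (by
        fun_prop (disch := intro s; exact (hfpos s).ne'))
    · intro v hv
      exact ((hgd v).differentiableAt).differentiableWithinAt
    · intro v hv
      rw [(hgd v).deriv]
      simp only [interior_Ici, Set.mem_Ioi] at hv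
      have := hq_le v hv.le
      rw [hq0] at this
      linarith
  have hg0 : g 0 = 0 := by
    simp [hg_def, hf_def]
  have hgv : 0 ≤ g u := by
    have := hgmono (Set.self_mem_Ici) (Set.mem_Ici.2 hu) hu
    rw [hg0] at this
    exact this
  have : Real.log (f u) ≤ (2 * p - 1) * u + u ^ 2 / 2 := by
    simp only [hg_def] at hgv
    linarith
  calc f u = rexp (Real.log (f u)) := (Real.exp_log (hfpos u)).symm
    _ ≤ rexp ((2 * p - 1) * u + u ^ 2 / 2) := exp_le_exp.2 this
/-- ∫ sqrt ≤ sqrt ∫ for a probability measure. -/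
lemma integral_sqrt_le_sqrt_integral {α : Type*} [MeasurableSpace α] (μ : Measure α)
    [IsProbabilityMeasure μ] (h : α → ℝ) (h0 : ∀ w, 0 ≤ h w) (hint : Integrable h μ) :
    ∫ w, Real.sqrt (h w) ∂μ ≤ Real.sqrt (∫ w, h w ∂μ) := by
  set I := ∫ w, Real.sqrt (h w) ∂μ with hI
  have hI0 : 0 ≤ I := integral_nonneg fun w => Real.sqrt_nonneg _
  have hint0 : 0 ≤ ∫ w, h w ∂μ := integral_nonneg h0
  rcases eq_or_lt_of_le hI0 with h0I | hIpos
  · rw [← h0I]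
    exact Real.sqrt_nonneg _
  · -- pointwise: sqrt (h w) ≤ (h w / I + I) / 2
    have hpt : ∀ w, Real.sqrt (h w) ≤ (h w / I + I) / 2 := by
      intro w
      have hs : Real.sqrt (h w) ^ 2 = h w := Real.sq_sqrt (h0 w)
      have := sq_nonneg (Real.sqrt (h w) - I)
      rw [sub_sq, hs] at this
      rw [div_add' _ _ _ hIpos.ne', div_div]
      rw [le_div_iff₀ (by positivity)]
      nlinarith
    have hle : I ≤ ((∫ w, h w ∂μ) / I + I) / 2 := by
      have := integral_mono_of_nonneg
        (Filter.Eventually.of_forall fun w => Real.sqrt_nonneg (h w))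
        (((hint.div_const I).add (integrable_const I)).div_const 2)
        (Filter.Eventually.of_forall hpt)
      simpa [integral_div, ← add_div, integral_add (hint.div_const I) (integrable_const I),
        measure_univ] using this
    have hII : I ^ 2 ≤ ∫ w, h w ∂μ := by
      rw [div_add' _ _ _ hIpos.ne', div_div, le_div_iff₀ (by positivity)] at hle
      nlinarith
    exact (Real.le_sqrt hI0 hint0).2 hII

/-- One-step Hoeffding mgf bound: if `|ψ - c| ≤ B` a.s., then
`E exp(t ψ) ≤ exp (t E ψ + t² B² / 2)`. -/
lemma step_mgf {α : Type*} [MeasurableSpace α] (μ : Measure α) [IsProbabilityMeasure μ]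
    (ψ : α → ℝ) (hmeas : AEStronglyMeasurable ψ μ) (c B t : ℝ) (hB : 0 ≤ B) (ht : 0 ≤ t)
    (hb : ∀ᵐ w ∂μ, |ψ w - c| ≤ B) :
    ∫ w, rexp (t * ψ w) ∂μ ≤ rexp (t * (∫ w, ψ w ∂μ) + t ^ 2 * B ^ 2 / 2) := by
  have hψint : Integrable ψ μ := by
    refine Integrable.mono' (integrable_const (|c| + B)) hmeas ?_
    filter_upwards [hb] with w hw
    rw [Real.norm_eq_abs]
    have := abs_sub_abs_le_abs_sub (ψ w) c
    linarith
  set m := ∫ w, ψ w ∂μ with hm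
  have hmc : |m - c| ≤ B := by
    have h1 : m - c = ∫ w, (ψ w - c) ∂μ := by
      rw [integral_sub hψint (integrable_const c), integral_const]
      simp [hm]
    rw [h1]
    have habs : |∫ w, (ψ w - c) ∂μ| ≤ ∫ w, |ψ w - c| ∂μ := by
      simpa [Real.norm_eq_abs] using norm_integral_le_integral_norm (fun w => ψ w - c) (μ := μ)
    have hB2 : ∫ w, |ψ w - c| ∂μ ≤ B := by
      have := integral_mono_of_nonneg
        (Filter.Eventually.of_forall fun w : α => abs_nonneg (ψ w - c))
        (integrable_const B) hb
      simpa using this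
    linarith
  rcases eq_or_lt_of_le ht with ht0 | htpos
  · simp [← ht0]
  rcases eq_or_lt_of_le hB with hB0 | hBpos
  · -- B = 0 : ψ = c a.e.
    have hψc : ψ =ᵐ[μ] fun _ => c := by
      filter_upwards [hb] with w hw
      rw [← hB0] at hw
      have := abs_nonneg (ψ w - c)
      have : |ψ w - c| = 0 := le_antisymm hw this
      simpa [sub_eq_zero] using abs_eq_zero.1 this
    have hmc' : m = c := by
      rw [hm, integral_congr_ae hψc]
      simp
    have : (fun w => rexp (t * ψ w)) =ᵐ[μ] fun _ => rexp (t * c) := by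
      filter_upwards [hψc] with w hw
      rw [hw]
    rw [integral_congr_ae this, integral_const]
    simp [hmc', ← hB0, measure_univ]
  -- main case
  set u := t * B with hu
  have hupos : 0 < u := mul_pos htpos hBpos
  set p := (m - c + B) / (2 * B) with hp
  have hp0 : 0 ≤ p := by
    apply div_nonneg _ (by linarith)
    have := abs_le.1 hmc
    linarith [this.1]
  have hp1 : p ≤ 1 := by
    rw [hp, div_le_one (by linarith)]
    have := abs_le.1 hmc
    linarith [this.2]
  -- pointwise convexity bound
  have hpt : ∀ᵐ w ∂μ, rexp (t * ψ w) ≤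
      ((c + B - ψ w) / (2 * B)) * rexp (t * (c - B)) +
      ((ψ w - (c - B)) / (2 * B)) * rexp (t * (c + B)) := by
    filter_upwards [hb] with w hw
    have hw' := abs_le.1 hw
    set θ := (ψ w - (c - B)) / (2 * B) with hθ
    have hθ0 : 0 ≤ θ := div_nonneg (by linarith [hw'.1]) (by linarith)
    have hθ1 : θ ≤ 1 := by
      rw [hθ, div_le_one (by linarith)]
      linarith [hw'.2]
    have hcomb : (1 - θ) * (t * (c - B)) + θ * (t * (c + B)) = t * ψ w := by
      rw [hθ]
      field_simp
      ring
    have hconv := convexOn_exp.2 (Set.mem_univ (t * (c - B))) (Set.mem_univ (t * (c + B)))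
      (by linarith : (0:ℝ) ≤ 1 - θ) hθ0 (by ring)
    rw [smul_eq_mul, smul_eq_mul, smul_eq_mul, smul_eq_mul, hcomb] at hconv
    have hθeq : (c + B - ψ w) / (2 * B) = 1 - θ := by
      rw [hθ]
      field_simp
      ring
    rw [hθeq]
    exact hconv
  -- integrate
  set A := rexp (t * (c - B)) with hA
  set C := rexp (t * (c + B)) with hC
  have hφeq : (fun w => ((c + B - ψ w) / (2 * B)) * A + ((ψ w - (c - B)) / (2 * B)) * C) =
      (fun w => (((c + B) * A - (c - B) * C) / (2 * B)) + ((C - A) / (2 * B)) * ψ w) := by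
    funext w
    field_simp
    ring
  have hintR : Integrable (fun w => ((c + B - ψ w) / (2 * B)) * A +
      ((ψ w - (c - B)) / (2 * B)) * C) μ := by
    rw [hφeq]
    exact (integrable_const _).add (hψint.const_mul _)
  have hstep1 : ∫ w, rexp (t * ψ w) ∂μ ≤
      (1 - p) * A + p * C := by
    have h1 := integral_mono_of_nonneg
      (Filter.Eventually.of_forall fun w => (Real.exp_pos _).le) hintR hpt
    have h2 : ∫ w, (((c + B - ψ w) / (2 * B)) * A + ((ψ w - (c - B)) / (2 * B)) * C) ∂μ =
        (1 - p) * A + p * C := by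
      rw [hφeq, integral_add (integrable_const _) (hψint.const_mul _), integral_const,
        integral_const_mul]
      simp only [measure_univ, probReal_univ, ENNReal.toReal_one, one_smul, smul_eq_mul, one_mul]
      rw [hp, ← hm]
      field_simp
      ring
    rw [h2] at h1
    exact h1
  have hstep2 : (1 - p) * A + p * C ≤ rexp (t * m + t ^ 2 * B ^ 2 / 2) := by
    have h2p : p * rexp u + (1 - p) * rexp (-u) ≤ rexp ((2 * p - 1) * u + u ^ 2 / 2) :=
      two_point_ineq p u hp0 hp1 hupos.le
    have e1 : A = rexp (t * c) * rexp (-u) := by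
      rw [hA, ← Real.exp_add, hu]
      congr 1
      ring
    have e2 : C = rexp (t * c) * rexp u := by
      rw [hC, ← Real.exp_add, hu]
      congr 1
      ring
    have hlhs : (1 - p) * A + p * C = rexp (t * c) * (p * rexp u + (1 - p) * rexp (-u)) := by
      rw [e1, e2]
      ring
    have hpu : (2 * p - 1) * u + u ^ 2 / 2 = t * (m - c) + t ^ 2 * B ^ 2 / 2 := by
      rw [hp, hu]
      field_simp
      ring
    rw [hlhs]
    calc rexp (t * c) * (p * rexp u + (1 - p) * rexp (-u))
        ≤ rexp (t * c) * rexp ((2 * p - 1) * u + u ^ 2 / 2) :=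
          mul_le_mul_of_nonneg_left h2p (Real.exp_pos _).le
      _ = rexp (t * m + t ^ 2 * B ^ 2 / 2) := by
          rw [← Real.exp_add, hpu]
          congr 1
          ring
  linarith
lemma sqrt_add_le' (a b : ℝ) (ha : 0 ≤ a) (hb : 0 ≤ b) :
    Real.sqrt (a + b) ≤ Real.sqrt a + Real.sqrt b := by
  have h : a + b ≤ (Real.sqrt a + Real.sqrt b) ^ 2 := by
    nlinarith [Real.sq_sqrt ha, Real.sq_sqrt hb, Real.sqrt_nonneg a, Real.sqrt_nonneg b,
      mul_nonneg (Real.sqrt_nonneg a) (Real.sqrt_nonneg b)]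
  calc Real.sqrt (a + b) ≤ Real.sqrt ((Real.sqrt a + Real.sqrt b) ^ 2) := Real.sqrt_le_sqrt h
    _ = Real.sqrt a + Real.sqrt b := Real.sqrt_sq (by positivity)

section Gsec

variable {N : ℕ}


/-- `G μ j s = EuclideanSpace ℝ (Fin N) ‖s + w₁ + ⋯ + w_j‖` for i.i.d. `wᵢ ∼ μ`. -/
noncomputable def Gfun (μ : Measure (EuclideanSpace ℝ (Fin N))) : ℕ → EuclideanSpace ℝ (Fin N) → ℝ
  | 0, s => ‖s‖
  | (j + 1), s => ∫ w, Gfun μ j (s + w) ∂μ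

lemma Gfun_zero (μ : Measure (EuclideanSpace ℝ (Fin N))) (s : EuclideanSpace ℝ (Fin N)) : Gfun μ 0 s = ‖s‖ := rfl

lemma Gfun_succ (μ : Measure (EuclideanSpace ℝ (Fin N))) (j : ℕ) (s : EuclideanSpace ℝ (Fin N)) :
    Gfun μ (j + 1) s = ∫ w, Gfun μ j (s + w) ∂μ := rfl

lemma Gfun_lip (μ : Measure (EuclideanSpace ℝ (Fin N))) [IsProbabilityMeasure μ] :
    ∀ j, ∀ s s' : EuclideanSpace ℝ (Fin N), |Gfun μ j s - Gfun μ j s'| ≤ ‖s - s'‖ := by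
  intro j
  induction j with
  | zero => intro s s'; exact abs_norm_sub_norm_le s s'
  | succ j ih =>
    intro s s'
    have hlip : LipschitzWith 1 (Gfun μ j) := by
      apply LipschitzWith.of_dist_le_mul
      intro x y
      rw [Real.dist_eq, dist_eq_norm]
      simpa using ih x y
    have hcont : Continuous (Gfun μ j) := hlip.continuous
    by_cases hint : Integrable (fun w => Gfun μ j (s + w)) μ
    · have hdiff : Integrable (fun w => Gfun μ j (s' + w) - Gfun μ j (s + w)) μ := by
        refine Integrable.mono' (integrable_const ‖s' - s‖)
          ((hcont.comp (continuous_const.add continuous_id)).aestronglyMeasurable.sub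
            (hcont.comp (continuous_const.add continuous_id)).aestronglyMeasurable) ?_
        refine Filter.Eventually.of_forall fun w => ?_
        rw [Real.norm_eq_abs]
        simpa using ih (s' + w) (s + w)
      have hint' : Integrable (fun w => Gfun μ j (s' + w)) μ := by
        have : (fun w => Gfun μ j (s' + w)) =
            fun w => Gfun μ j (s + w) + (Gfun μ j (s' + w) - Gfun μ j (s + w)) := by
          funext w; ring
        rw [this]
        exact hint.add hdiff
      rw [Gfun_succ, Gfun_succ, ← integral_sub hint hint']
      have h1 : |∫ w, (Gfun μ j (s + w) - Gfun μ j (s' + w)) ∂μ| ≤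
          ∫ w, |Gfun μ j (s + w) - Gfun μ j (s' + w)| ∂μ := by
        simpa [Real.norm_eq_abs] using
          norm_integral_le_integral_norm (fun w => Gfun μ j (s + w) - Gfun μ j (s' + w)) (μ := μ)
      have h2 : ∫ w, |Gfun μ j (s + w) - Gfun μ j (s' + w)| ∂μ ≤ ‖s - s'‖ := by
        have := integral_mono_of_nonneg
          (Filter.Eventually.of_forall fun w : EuclideanSpace ℝ (Fin N) => abs_nonneg (Gfun μ j (s + w) - Gfun μ j (s' + w)))
          (integrable_const (μ := μ) ‖s - s'‖)
          (Filter.Eventually.of_forall fun w : EuclideanSpace ℝ (Fin N) => by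
            simpa using ih (s + w) (s' + w))
        simpa using this
      linarith [abs_nonneg (∫ w, (Gfun μ j (s + w) - Gfun μ j (s' + w)) ∂μ)]
    · have hint' : ¬ Integrable (fun w => Gfun μ j (s' + w)) μ := by
        intro h
        apply hint
        have hdiff : Integrable (fun w => Gfun μ j (s + w) - Gfun μ j (s' + w)) μ := by
          refine Integrable.mono' (integrable_const ‖s - s'‖)
            ((hcont.comp (continuous_const.add continuous_id)).aestronglyMeasurable.sub
              (hcont.comp (continuous_const.add continuous_id)).aestronglyMeasurable) ?_
          refine Filter.Eventually.of_forall fun w => ?_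
          rw [Real.norm_eq_abs]
          simpa using ih (s + w) (s' + w)
        have : (fun w => Gfun μ j (s + w)) =
            fun w => Gfun μ j (s' + w) + (Gfun μ j (s + w) - Gfun μ j (s' + w)) := by
          funext w; ring
        rw [this]
        exact h.add hdiff
      rw [Gfun_succ, Gfun_succ, integral_undef hint, integral_undef hint']
      simpa using norm_nonneg (s - s')

lemma Gfun_nonneg (μ : Measure (EuclideanSpace ℝ (Fin N))) [IsProbabilityMeasure μ] :
    ∀ j (s : EuclideanSpace ℝ (Fin N)), 0 ≤ Gfun μ j s := by
  intro j
  induction j with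
  | zero => intro s; exact norm_nonneg s
  | succ j ih =>
    intro s
    rw [Gfun_succ]
    exact integral_nonneg fun w => ih (s + w)

lemma Gfun_cont (μ : Measure (EuclideanSpace ℝ (Fin N))) [IsProbabilityMeasure μ] (j : ℕ) :
    Continuous (Gfun μ j) := by
  have hlip : LipschitzWith 1 (Gfun μ j) := by
    apply LipschitzWith.of_dist_le_mul
    intro x y
    rw [Real.dist_eq, dist_eq_norm]
    simpa using Gfun_lip μ j x y
  exact hlip.continuous

variable (μ : Measure (EuclideanSpace ℝ (Fin N))) [IsProbabilityMeasure μ] {R : ℝ} (hR : 0 ≤ R)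
  (hball : ∀ᵐ w ∂μ, ‖w‖ ≤ R)

include hball in
lemma Gfun_integrable (j : ℕ) (s : EuclideanSpace ℝ (Fin N)) :
    Integrable (fun w => Gfun μ j (s + w)) μ := by
  refine Integrable.mono' (integrable_const (|Gfun μ j 0| + ‖s‖ + R))
    ((Gfun_cont μ j).comp (continuous_const.add continuous_id)).aestronglyMeasurable ?_
  filter_upwards [hball] with w hw
  rw [Real.norm_eq_abs]
  have h1 : |Gfun μ j (s + w) - Gfun μ j 0| ≤ ‖s + w‖ := by simpa using Gfun_lip μ j (s + w) 0
  have h2 : ‖s + w‖ ≤ ‖s‖ + ‖w‖ := norm_add_le s w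
  have := abs_sub_abs_le_abs_sub (Gfun μ j (s + w)) (Gfun μ j 0)
  have h3 : |Gfun μ j (s + w)| ≤ |Gfun μ j 0| + ‖s + w‖ := by linarith
  linarith

include hball in
lemma mu_moment_integrable : Integrable (fun w : EuclideanSpace ℝ (Fin N) => ‖w‖ ^ 2) μ := by
  refine Integrable.mono' (integrable_const (R ^ 2)) ?_ ?_
  · exact (continuous_norm.pow 2).aestronglyMeasurable
  · filter_upwards [hball] with w hw
    rw [Real.norm_eq_abs, abs_of_nonneg (by positivity)]
    have h0 : (0:ℝ) ≤ ‖w‖ := norm_nonneg w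
    nlinarith

include hball in
lemma mu_id_integrable : Integrable (fun w : EuclideanSpace ℝ (Fin N) => w) μ := by
  refine Integrable.mono' (integrable_const R) continuous_id.aestronglyMeasurable ?_
  filter_upwards [hball] with w hw
  exact hw

include hball in
lemma second_moment_shift (hmean : ∫ w, w ∂μ = 0) (s : EuclideanSpace ℝ (Fin N)) :
    ∫ w, ‖s + w‖ ^ 2 ∂μ = ‖s‖ ^ 2 + ∫ w, ‖w‖ ^ 2 ∂μ := by
  have hexp : ∀ w : EuclideanSpace ℝ (Fin N), ‖s + w‖ ^ 2 = ‖s‖ ^ 2 + 2 * (inner ℝ s w : ℝ) + ‖w‖ ^ 2 :=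
    fun w => norm_add_sq_real s w
  have hinner_int : Integrable (fun w : EuclideanSpace ℝ (Fin N) => 2 * (inner ℝ s w : ℝ)) μ := by
    refine Integrable.mono' (integrable_const (2 * ‖s‖ * R))
      (((continuous_const (y := s)).inner continuous_id).aestronglyMeasurable.const_mul 2) ?_
    filter_upwards [hball] with w hw
    rw [Real.norm_eq_abs, abs_mul, abs_of_nonneg (by norm_num : (0:ℝ) ≤ 2)]
    have h1 : |(inner ℝ s w : ℝ)| ≤ ‖s‖ * ‖w‖ := abs_real_inner_le_norm s w
    have h2 : ‖s‖ * ‖w‖ ≤ ‖s‖ * R := mul_le_mul_of_nonneg_left hw (norm_nonneg s)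
    nlinarith
  have hsum : ∫ w, ‖s + w‖ ^ 2 ∂μ =
      ∫ w, (‖s‖ ^ 2 + (2 * (inner ℝ s w : ℝ) + ‖w‖ ^ 2)) ∂μ := by
    congr 1
    funext w
    rw [hexp w]
    ring
  have h1 : Integrable (fun w : EuclideanSpace ℝ (Fin N) => 2 * (inner ℝ s w : ℝ) + ‖w‖ ^ 2) μ :=
    hinner_int.add (mu_moment_integrable μ hball)
  rw [hsum, integral_add (integrable_const _) h1,
    integral_add hinner_int (mu_moment_integrable μ hball), integral_const]
  have hin : ∫ w, (2 * (inner ℝ s w : ℝ)) ∂μ = 0 := by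
    have h1 : ∫ w, (inner ℝ s w : ℝ) ∂μ = (inner ℝ s (∫ w, w ∂μ) : ℝ) :=
      integral_inner (mu_id_integrable μ hball) s
    rw [integral_const_mul, h1, hmean]
    simp
  rw [hin]
  simp [measure_univ]

include hball in
lemma Gfun_le_sqrt (hmean : ∫ w, w ∂μ = 0) :
    ∀ j (s : EuclideanSpace ℝ (Fin N)), Gfun μ j s ≤ Real.sqrt (‖s‖ ^ 2 + j * ∫ w, ‖w‖ ^ 2 ∂μ) := by
  have hσ0 : 0 ≤ ∫ w, ‖w‖ ^ 2 ∂μ := integral_nonneg fun w => by positivity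
  intro j
  induction j with
  | zero =>
    intro s
    simp [Gfun_zero, Real.sqrt_sq_eq_abs, abs_of_nonneg (norm_nonneg s)]
  | succ j ih =>
    intro s
    rw [Gfun_succ]
    have hmono : ∫ w, Gfun μ j (s + w) ∂μ ≤
        ∫ w, Real.sqrt (‖s + w‖ ^ 2 + j * ∫ w', ‖w'‖ ^ 2 ∂μ) ∂μ := by
      apply integral_mono_of_nonneg ?_ ?_ (Filter.Eventually.of_forall fun w => ih (s + w))
      ·
        refine Filter.Eventually.of_forall fun w => ?_
        -- Gfun μ j x ≥ 0? prove by induction externally; here use bound: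
        exact Gfun_nonneg μ j (s + w)
      · refine Integrable.mono' (integrable_const (‖s‖ + R + Real.sqrt (j * ∫ w', ‖w'‖ ^ 2 ∂μ)))
          ((Real.continuous_sqrt.comp ((((continuous_const.add continuous_id).norm).pow 2).add
            continuous_const)).aestronglyMeasurable) ?_
        filter_upwards [hball] with w hw
        rw [Real.norm_eq_abs, abs_of_nonneg (Real.sqrt_nonneg _)]
        calc Real.sqrt (‖s + w‖ ^ 2 + j * ∫ w', ‖w'‖ ^ 2 ∂μ)
            ≤ Real.sqrt (‖s + w‖ ^ 2) + Real.sqrt (j * ∫ w', ‖w'‖ ^ 2 ∂μ) :=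
              sqrt_add_le' _ _ (by positivity) (by positivity)
          _ ≤ ‖s‖ + R + Real.sqrt (j * ∫ w', ‖w'‖ ^ 2 ∂μ) := by
              rw [Real.sqrt_sq (norm_nonneg _)]
              have := norm_add_le s w
              linarith
    have hjensen : ∫ w, Real.sqrt (‖s + w‖ ^ 2 + j * ∫ w', ‖w'‖ ^ 2 ∂μ) ∂μ ≤
        Real.sqrt (∫ w, (‖s + w‖ ^ 2 + j * ∫ w', ‖w'‖ ^ 2 ∂μ) ∂μ) := by
      apply integral_sqrt_le_sqrt_integral μ _ (fun w => by positivity)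
      apply Integrable.add ?_ (integrable_const _)
      refine Integrable.mono' (integrable_const ((‖s‖ + R) ^ 2))
        ((((continuous_const.add continuous_id).norm).pow 2).aestronglyMeasurable) ?_
      filter_upwards [hball] with w hw
      rw [Real.norm_eq_abs, abs_of_nonneg (by positivity)]
      have h1 : ‖s + w‖ ≤ ‖s‖ + R := le_trans (norm_add_le s w) (by linarith)
      have h0 : (0:ℝ) ≤ ‖s + w‖ := norm_nonneg _
      nlinarith
    have hval : ∫ w, (‖s + w‖ ^ 2 + j * ∫ w', ‖w'‖ ^ 2 ∂μ) ∂μ =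
        ‖s‖ ^ 2 + (j + 1) * ∫ w', ‖w'‖ ^ 2 ∂μ := by
      rw [integral_add ?_ (integrable_const _)]
      · rw [second_moment_shift μ hball hmean s, integral_const]
        simp only [measure_univ, probReal_univ, ENNReal.toReal_one, one_smul, smul_eq_mul, one_mul]
        ring
      · refine Integrable.mono' (integrable_const ((‖s‖ + R) ^ 2))
          ((((continuous_const.add continuous_id).norm).pow 2).aestronglyMeasurable) ?_
        filter_upwards [hball] with w hw
        rw [Real.norm_eq_abs, abs_of_nonneg (by positivity)]
        have h1 : ‖s + w‖ ≤ ‖s‖ + R := le_trans (norm_add_le s w) (by linarith)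
        have h0 : (0:ℝ) ≤ ‖s + w‖ := norm_nonneg _
        nlinarith
    calc ∫ w, Gfun μ j (s + w) ∂μ ≤ _ := hmono
      _ ≤ _ := hjensen
      _ = Real.sqrt (‖s‖ ^ 2 + (j + 1) * ∫ w', ‖w'‖ ^ 2 ∂μ) := by rw [hval]
      _ = Real.sqrt (‖s‖ ^ 2 + (↑(j + 1)) * ∫ w', ‖w'‖ ^ 2 ∂μ) := by push_cast; ring_nf

end Gsec
set_option maxHeartbeats 1000000 in
theorem stmt_9 {Ω : Type*} [MeasurableSpace Ω] (P : Measure Ω)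
    [IsProbabilityMeasure P] (N M : ℕ) (hM : 0 < M)
    (ζ : Fin M → Ω → EuclideanSpace ℝ (Fin N))
    (hmeas : ∀ i, Measurable (ζ i))
    (hindep : iIndepFun ζ P)
    (hident : ∀ i j, Measure.map (ζ i) P = Measure.map (ζ j) P)
    (hmean : ∀ i, ∫ ω, ζ i ω ∂P = 0)
    (hcov : ∀ i a b, ∫ ω, ζ i ω a * ζ i ω b ∂P = if a = b then (1 : ℝ) else 0)
    (R : ℝ) (hbound : ∀ i, ∀ᵐ ω ∂P, ‖ζ i ω‖ ^ 2 ≤ R ^ 2)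
    (δ : ℝ) (hδ : 0 < δ) (hδ1 : δ < 1) :
    ENNReal.ofReal (1 - δ) ≤
      P {ω | ‖(M : ℝ)⁻¹ • ∑ i, ζ i ω‖ ^ 2 ≤
        (R ^ 2 / M) * (2 + Real.sqrt (2 * Real.log (1 / δ))) ^ 2} := by
  classical
  set x := Real.sqrt (2 * Real.log (1 / δ)) with hx
  have hlog0 : 0 ≤ Real.log (1 / δ) := Real.log_nonneg (by rw [le_div_iff₀ hδ]; linarith)
  have hx0 : 0 ≤ x := Real.sqrt_nonneg _
  have hx2 : x ^ 2 = 2 * Real.log (1 / δ) := Real.sq_sqrt (by linarith)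
  set R' := |R| with hR'
  have hR'0 : 0 ≤ R' := abs_nonneg R
  have hRR' : R ^ 2 = R' ^ 2 := (sq_abs R).symm
  set Ev := {ω | ‖(M : ℝ)⁻¹ • ∑ i, ζ i ω‖ ^ 2 ≤ (R ^ 2 / M) * (2 + x) ^ 2} with hEv
  -- norm bounds
  have hbnd : ∀ i, ∀ᵐ ω ∂P, ‖ζ i ω‖ ≤ R' := by
    intro i
    filter_upwards [hbound i] with ω hω
    calc ‖ζ i ω‖ = Real.sqrt (‖ζ i ω‖ ^ 2) := (Real.sqrt_sq (norm_nonneg _)).symm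
      _ ≤ Real.sqrt (R ^ 2) := Real.sqrt_le_sqrt hω
      _ = R' := Real.sqrt_sq_eq_abs R
  -- the partial sums
  set S : ℕ → Ω → EuclideanSpace ℝ (Fin N) :=
    fun m ω => ∑ i ∈ Finset.filter (fun i : Fin M => (i : ℕ) < m) Finset.univ, ζ i ω with hSdef
  have hSmeas : ∀ m, Measurable (S m) :=
    fun m => Finset.measurable_sum _ fun i _ => hmeas i
  have hS0 : ∀ ω, S 0 ω = 0 := by
    intro ω
    rw [hSdef]
    simp
  have hStot : ∀ ω, S M ω = ∑ i, ζ i ω := by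
    intro ω
    rw [hSdef]
    congr 1
    ext i
    simp [i.isLt]
  have hallbnd : ∀ᵐ ω ∂P, ∀ i, ‖ζ i ω‖ ≤ R' := (ae_all_iff).2 hbnd
  have hSbound : ∀ m, ∀ᵐ ω ∂P, ‖S m ω‖ ≤ m * R' := by
    intro m
    filter_upwards [hallbnd] with ω hω
    have hcard : (Finset.filter (fun i : Fin M => (i : ℕ) < m) Finset.univ).card ≤ m := by
      have := Finset.card_le_card_of_injOn
        (s := Finset.filter (fun i : Fin M => (i : ℕ) < m) Finset.univ)
        (t := Finset.range m) (fun i : Fin M => (i : ℕ))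
        (fun i hi => Finset.mem_range.2 (Finset.mem_filter.1 hi).2)
        (fun a _ b _ hab => Fin.ext hab)
      simpa [Finset.card_range] using this
    calc ‖S m ω‖ ≤ ∑ i ∈ Finset.filter (fun i : Fin M => (i : ℕ) < m) Finset.univ, ‖ζ i ω‖ :=
          norm_sum_le _ _
      _ ≤ ∑ _i ∈ Finset.filter (fun i : Fin M => (i : ℕ) < m) Finset.univ, R' :=
          Finset.sum_le_sum fun i _ => hω i
      _ = (Finset.filter (fun i : Fin M => (i : ℕ) < m) Finset.univ).card * R' := by
          rw [Finset.sum_const, nsmul_eq_mul]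
      _ ≤ m * R' := by
          have : ((Finset.filter (fun i : Fin M => (i : ℕ) < m) Finset.univ).card : ℝ) ≤ m := by
            exact_mod_cast hcard
          nlinarith
  -- measurability of the event
  have hsummeas : Measurable (fun ω => ∑ i, ζ i ω) :=
    Finset.measurable_sum _ fun i _ => hmeas i
  have hEvMeas : MeasurableSet Ev := by
    rw [hEv]
    exact measurableSet_le (((hsummeas.const_smul ((M:ℝ)⁻¹)).norm).pow_const 2) measurable_const
  -- easy case : R' = 0
  rcases eq_or_lt_of_le hR'0 with hR0 | hR'pos
  · have h1 : ∀ᵐ ω ∂P, ω ∈ Ev := by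
      filter_upwards [hallbnd] with ω hω
      have hz : ∀ i : Fin M, ζ i ω = 0 := by
        intro i
        have := hω i
        rw [← hR0] at this
        exact norm_le_zero_iff.1 this
      have hzz : ∑ i, ζ i ω = 0 := Finset.sum_eq_zero fun i _ => hz i
      rw [hEv]
      simp only [Set.mem_setOf_eq, hzz, smul_zero, norm_zero]
      have : (0:ℝ) ≤ (R ^ 2 / M) * (2 + x) ^ 2 := by positivity
      simpa using this
    have h2 : (Set.univ : Set Ω) ≤ᵐ[P] Ev := by
      filter_upwards [h1] with ω h
      intro _
      exact h
    calc ENNReal.ofReal (1 - δ) ≤ 1 := ENNReal.ofReal_le_one.2 (by linarith)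
      _ = P Set.univ := measure_univ.symm
      _ ≤ P Ev := measure_mono_ae h2
  -- main case
  set i0 : Fin M := ⟨0, hM⟩ with hi0
  set μ : Measure (EuclideanSpace ℝ (Fin N)) := Measure.map (ζ i0) P with hμdef
  have hμprob : IsProbabilityMeasure μ := Measure.isProbabilityMeasure_map (hmeas i0).aemeasurable
  have hmap : ∀ i, Measure.map (ζ i) P = μ := fun i => (hident i i0).trans hμdef.symm
  have hball : ∀ᵐ w ∂μ, ‖w‖ ≤ R' := by
    rw [hμdef, ae_map_iff (hmeas i0).aemeasurable
      (measurableSet_le measurable_norm measurable_const)]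
    exact hbnd i0
  have hmeanμ : ∫ w, w ∂μ = 0 := by
    rw [hμdef]
    rw [integral_map (φ := ζ i0) (f := fun w : EuclideanSpace ℝ (Fin N) => w)
      (hmeas i0).aemeasurable aestronglyMeasurable_id]
    exact hmean i0
  set σ2 := ∫ w, ‖w‖ ^ 2 ∂μ with hσ2def
  have hσ2R : σ2 ≤ R' ^ 2 := by
    rw [hσ2def]
    have h := integral_mono_ae (mu_moment_integrable μ hball)
      (integrable_const (μ := μ) (R' ^ 2))
      (by filter_upwards [hball] with w hw
          exact pow_le_pow_left₀ (norm_nonneg w) hw 2)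
    simpa using h
  -- parameters
  set sM := Real.sqrt M with hsM
  have hsMpos : 0 < sM := Real.sqrt_pos.2 (by exact_mod_cast hM)
  have hsM2 : sM ^ 2 = M := Real.sq_sqrt (by positivity)
  set t := (1 + x) / (sM * R') with ht_def
  have ht : 0 ≤ t := by positivity
  set r := sM * R' * (2 + x) with hr_def
  -- THE KEY INDUCTION
  have key : ∀ m, m ≤ M →
      ∫ ω, rexp (t * Gfun μ (M - m) (S m ω)) ∂P ≤
        rexp (t * Gfun μ M 0 + m * (t ^ 2 * R' ^ 2 / 2)) := by
    intro m
    induction m with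
    | zero =>
      intro _
      have : ∀ ω, rexp (t * Gfun μ (M - 0) (S 0 ω)) = rexp (t * Gfun μ M 0) := by
        intro ω
        rw [hS0 ω, Nat.sub_zero]
      rw [integral_congr_ae (Filter.Eventually.of_forall this), integral_const]
      simp [measure_univ]
    | succ m ih =>
      intro hm1
      have hmM : m < M := hm1
      have ihm := ih hmM.le
      set im : Fin M := ⟨m, hmM⟩ with him
      set Fm := Finset.filter (fun i : Fin M => (i : ℕ) < m) Finset.univ with hFm
      have hnotmem : im ∉ Fm := by simp [hFm, him]
      have hSsucc : ∀ ω, S (m + 1) ω = S m ω + ζ im ω := by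
        intro ω
        rw [hSdef]
        have hins : Finset.filter (fun i : Fin M => (i : ℕ) < m + 1) Finset.univ
            = insert im Fm := by
          ext i
          constructor
          · intro h
            have hi : (i : ℕ) < m + 1 := (Finset.mem_filter.1 h).2
            rcases Nat.lt_succ_iff_lt_or_eq.1 hi with h' | h'
            · exact Finset.mem_insert_of_mem (Finset.mem_filter.2 ⟨Finset.mem_univ _, h'⟩)
            · have he : i = im := Fin.ext (by rw [him]; exact h')
              rw [he]
              exact Finset.mem_insert_self _ _
          · intro h
            rcases Finset.mem_insert.1 h with h' | h'
            · refine Finset.mem_filter.2 ⟨Finset.mem_univ _, ?_⟩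
              rw [h', him]
              exact Nat.lt_succ_self m
            · refine Finset.mem_filter.2 ⟨Finset.mem_univ _, ?_⟩
              have := (Finset.mem_filter.1 h').2
              omega
        simp only [hSdef]
        rw [hins, Finset.sum_insert hnotmem, add_comm]
      set j := M - (m + 1) with hj
      have hj1 : j + 1 = M - m := by omega
      -- independence
      have hSum_eq : (∑ i ∈ Fm, ζ i) = S m := by
        funext ω
        rw [hSdef, Finset.sum_apply]
      have hindepSm : IndepFun (S m) (ζ im) P := by
        have := hindep.indepFun_finsetSum_of_notMem hmeas hnotmem
        rwa [hSum_eq] at this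
      have hpairmeas : Measurable (fun ω => (S m ω, ζ im ω)) :=
        (hSmeas m).prodMk (hmeas im)
      have hν := (indepFun_iff_map_prod_eq_prod_map_map (hSmeas m).aemeasurable
        (hmeas im).aemeasurable).1 hindepSm
      rw [hmap im] at hν
      set ν := Measure.map (S m) P with hνdef
      have hνprob : IsProbabilityMeasure ν := Measure.isProbabilityMeasure_map (hSmeas m).aemeasurable
      have hνb : ∀ᵐ s ∂ν, ‖s‖ ≤ m * R' := by
        rw [hνdef, ae_map_iff (hSmeas m).aemeasurable
          (measurableSet_le measurable_norm measurable_const)]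
        exact hSbound m
      -- continuity of integrands
      have hcontG : Continuous (Gfun μ j) := Gfun_cont μ j
      have hcontΦ : Continuous (fun p : (EuclideanSpace ℝ (Fin N)) × (EuclideanSpace ℝ (Fin N)) =>
          rexp (t * Gfun μ j (p.1 + p.2))) :=
        Real.continuous_exp.comp ((continuous_const.mul
          (hcontG.comp (continuous_fst.add continuous_snd))))
      -- the AE bound on the product
      have haeprod : ∀ᵐ p ∂(ν.prod μ), ‖p.1‖ ≤ m * R' ∧ ‖p.2‖ ≤ R' := by
        refine (Measure.ae_prod_iff_ae_ae ?_).2 ?_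
        · exact (measurableSet_le measurable_fst.norm measurable_const).inter
            (measurableSet_le measurable_snd.norm measurable_const)
        · filter_upwards [hνb] with s hs
          filter_upwards [hball] with w hw
          exact ⟨hs, hw⟩
      -- integrability on the product
      have hG0lip : ∀ (y : EuclideanSpace ℝ (Fin N)), Gfun μ j y ≤ |Gfun μ j 0| + ‖y‖ := by
        intro y
        have h1 : |Gfun μ j y - Gfun μ j 0| ≤ ‖y‖ := by simpa using Gfun_lip μ j y 0
        have h2 := abs_le.1 h1
        have h3 := le_abs_self (Gfun μ j 0)
        have h4 := neg_abs_le (Gfun μ j 0)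
        linarith [h2.2]
      have hintP : Integrable (fun p : (EuclideanSpace ℝ (Fin N)) × (EuclideanSpace ℝ (Fin N)) =>
          rexp (t * Gfun μ j (p.1 + p.2))) (ν.prod μ) := by
        refine Integrable.mono' (integrable_const
          (rexp (t * (|Gfun μ j 0| + m * R' + R')))) hcontΦ.aestronglyMeasurable ?_
        filter_upwards [haeprod] with p hp
        rw [Real.norm_eq_abs, abs_of_nonneg (Real.exp_pos _).le, Real.exp_le_exp]
        apply mul_le_mul_of_nonneg_left _ ht
        have h1 := hG0lip (p.1 + p.2)
        have h2 : ‖p.1 + p.2‖ ≤ ‖p.1‖ + ‖p.2‖ := norm_add_le _ _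
        linarith [hp.1, hp.2]
      -- rewrite the LHS as a double integral
      have hL : ∫ ω, rexp (t * Gfun μ (M - (m + 1)) (S (m + 1) ω)) ∂P
          = ∫ s, ∫ w, rexp (t * Gfun μ j (s + w)) ∂μ ∂ν := by
        have e1 : ∫ ω, rexp (t * Gfun μ (M - (m + 1)) (S (m + 1) ω)) ∂P
            = ∫ ω, rexp (t * Gfun μ j (S m ω + ζ im ω)) ∂P := by
          apply integral_congr_ae
          apply Filter.Eventually.of_forall
          intro ω
          beta_reduce
          rw [hSsucc ω, hj]
        have e2 : ∫ ω, rexp (t * Gfun μ j (S m ω + ζ im ω)) ∂P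
            = ∫ p, rexp (t * Gfun μ j (p.1 + p.2))
                ∂(Measure.map (fun ω => (S m ω, ζ im ω)) P) := by
          rw [integral_map hpairmeas.aemeasurable hcontΦ.aestronglyMeasurable]
        rw [e1, e2, hν, MeasureTheory.integral_prod _ hintP]
      rw [hL]
      -- the inner Hoeffding step
      have hinner : ∀ s, ∫ w, rexp (t * Gfun μ j (s + w)) ∂μ ≤
          rexp (t * Gfun μ (j + 1) s + t ^ 2 * R' ^ 2 / 2) := by
        intro s
        have hψb : ∀ᵐ w ∂μ, |Gfun μ j (s + w) - Gfun μ j s| ≤ R' := by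
          filter_upwards [hball] with w hw
          have h1 : |Gfun μ j (s + w) - Gfun μ j s| ≤ ‖w‖ := by
            simpa using Gfun_lip μ j (s + w) s
          linarith
        have := step_mgf μ (fun w => Gfun μ j (s + w))
          ((hcontG.comp (continuous_const.add continuous_id)).aestronglyMeasurable)
          (Gfun μ j s) R' t hR'0 ht hψb
        rwa [← Gfun_succ] at this
      -- outer integral estimate
      have hc0 : (0:ℝ) ≤ t ^ 2 * R' ^ 2 / 2 := by positivity
      have houter : ∫ s, (∫ w, rexp (t * Gfun μ j (s + w)) ∂μ) ∂ν ≤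
          ∫ s, rexp (t * Gfun μ (j + 1) s + t ^ 2 * R' ^ 2 / 2) ∂ν := by
        apply integral_mono_of_nonneg
        · exact Filter.Eventually.of_forall fun s =>
            integral_nonneg fun w => (Real.exp_pos _).le
        · have hcont2 : Continuous (fun s : EuclideanSpace ℝ (Fin N) =>
              rexp (t * Gfun μ (j + 1) s + t ^ 2 * R' ^ 2 / 2)) :=
            Real.continuous_exp.comp ((continuous_const.mul (Gfun_cont μ (j+1))).add
              continuous_const)
          refine Integrable.mono' (integrable_const
            (rexp (t * (|Gfun μ (j+1) 0| + m * R') + t ^ 2 * R' ^ 2 / 2)))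
            hcont2.aestronglyMeasurable ?_
          filter_upwards [hνb] with s hs
          rw [Real.norm_eq_abs, abs_of_nonneg (Real.exp_pos _).le, Real.exp_le_exp]
          have h1 : |Gfun μ (j+1) s - Gfun μ (j+1) 0| ≤ ‖s‖ := by
            simpa using Gfun_lip μ (j+1) s 0
          have h2 := (abs_le.1 h1).2
          have h3 := le_abs_self (Gfun μ (j+1) 0)
          have h4 : Gfun μ (j+1) s ≤ |Gfun μ (j+1) 0| + m * R' := by linarith
          have := mul_le_mul_of_nonneg_left h4 ht
          linarith
        · exact Filter.Eventually.of_forall hinner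
      -- put things together
      have hfac : ∫ s, rexp (t * Gfun μ (j + 1) s + t ^ 2 * R' ^ 2 / 2) ∂ν
          = rexp (t ^ 2 * R' ^ 2 / 2) * ∫ s, rexp (t * Gfun μ (j + 1) s) ∂ν := by
        rw [← integral_const_mul]
        congr 1
        funext s
        rw [← Real.exp_add]
        congr 1
        ring
      have hback : ∫ s, rexp (t * Gfun μ (j + 1) s) ∂ν
          = ∫ ω, rexp (t * Gfun μ (M - m) (S m ω)) ∂P := by
        have hc : Continuous (fun s : EuclideanSpace ℝ (Fin N) =>
            rexp (t * Gfun μ (j + 1) s)) :=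
          Real.continuous_exp.comp (continuous_const.mul (Gfun_cont μ (j+1)))
        rw [hνdef, integral_map (hSmeas m).aemeasurable hc.aestronglyMeasurable, hj1]
      calc ∫ s, (∫ w, rexp (t * Gfun μ j (s + w)) ∂μ) ∂ν
          ≤ ∫ s, rexp (t * Gfun μ (j + 1) s + t ^ 2 * R' ^ 2 / 2) ∂ν := houter
        _ = rexp (t ^ 2 * R' ^ 2 / 2) * ∫ ω, rexp (t * Gfun μ (M - m) (S m ω)) ∂P := by
            rw [hfac, hback]
        _ ≤ rexp (t ^ 2 * R' ^ 2 / 2) * rexp (t * Gfun μ M 0 + m * (t ^ 2 * R' ^ 2 / 2)) :=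
            mul_le_mul_of_nonneg_left ihm (Real.exp_pos _).le
        _ = rexp (t * Gfun μ M 0 + (↑(m + 1) : ℝ) * (t ^ 2 * R' ^ 2 / 2)) := by
            rw [← Real.exp_add]
            congr 1
            push_cast
            ring
  -- mgf bound for the full sum
  have hGM : Gfun μ M 0 ≤ sM * R' := by
    have h1 := Gfun_le_sqrt μ hball hmeanμ M 0
    rw [norm_zero] at h1
    calc Gfun μ M 0 ≤ Real.sqrt (0 ^ 2 + M * σ2) := h1
      _ ≤ Real.sqrt (M * R' ^ 2) := by
          apply Real.sqrt_le_sqrt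
          have hM0 : (0:ℝ) ≤ (M:ℝ) := by positivity
          nlinarith
      _ = sM * R' := by
          rw [hsM, Real.sqrt_mul (by positivity), Real.sqrt_sq hR'0]
  have hmgf : ∫ ω, rexp (t * ‖S M ω‖) ∂P ≤ rexp (t * (sM * R') + M * (t ^ 2 * R' ^ 2 / 2)) := by
    have h := key M le_rfl
    rw [Nat.sub_self] at h
    have h2 : ∫ ω, rexp (t * Gfun μ 0 (S M ω)) ∂P = ∫ ω, rexp (t * ‖S M ω‖) ∂P := rfl
    rw [h2] at h
    refine le_trans h (Real.exp_le_exp.2 ?_)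
    have := mul_le_mul_of_nonneg_left hGM ht
    linarith
  -- Chernoff
  have hXint : Integrable (fun ω => rexp (t * ‖S M ω‖)) P := by
    refine Integrable.mono' (integrable_const (rexp (t * (M * R'))))
      ((Real.measurable_exp.comp ((hSmeas M).norm.const_mul t)).aestronglyMeasurable) ?_
    filter_upwards [hSbound M] with ω hω
    rw [Real.norm_eq_abs, abs_of_nonneg (Real.exp_pos _).le, Real.exp_le_exp]
    exact mul_le_mul_of_nonneg_left hω ht
  have hchern := measure_ge_le_exp_mul_mgf (X := fun ω => ‖S M ω‖) (μ := P) r ht hXint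
  have hmgf_eq : mgf (fun ω => ‖S M ω‖) P t = ∫ ω, rexp (t * ‖S M ω‖) ∂P := rfl
  have harg : -t * r + (t * (sM * R') + M * (t ^ 2 * R' ^ 2 / 2)) = -(1 + x) ^ 2 / 2 := by
    have hMsM : (M:ℝ) = sM ^ 2 := hsM2.symm
    rw [ht_def, hr_def, hMsM]
    have hne : sM * R' ≠ 0 := by positivity
    field_simp
    ring
  have htail : (P {ω | r ≤ ‖S M ω‖}).toReal ≤ δ := by
    refine le_trans hchern ?_
    rw [hmgf_eq]
    calc rexp (-t * r) * ∫ ω, rexp (t * ‖S M ω‖) ∂P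
        ≤ rexp (-t * r) * rexp (t * (sM * R') + M * (t ^ 2 * R' ^ 2 / 2)) :=
          mul_le_mul_of_nonneg_left hmgf (Real.exp_pos _).le
      _ = rexp (-(1 + x) ^ 2 / 2) := by rw [← Real.exp_add, harg]
      _ ≤ rexp (-(x ^ 2 / 2)) := Real.exp_le_exp.2 (by nlinarith)
      _ = δ := by
          rw [hx2]
          have : -(2 * Real.log (1 / δ) / 2) = -Real.log (1/δ) := by ring
          rw [this, Real.exp_neg, Real.exp_log (by positivity), one_div, inv_inv]
  -- event inclusion
  have hsub : Evᶜ ⊆ {ω | r ≤ ‖S M ω‖} := by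
    intro ω hω
    simp only [hEv, Set.mem_compl_iff, Set.mem_setOf_eq, not_le] at hω
    have hSω : ∑ i, ζ i ω = S M ω := (hStot ω).symm
    rw [hSω] at hω
    have hnorm : ‖(M:ℝ)⁻¹ • S M ω‖ = (M:ℝ)⁻¹ * ‖S M ω‖ := by
      rw [norm_smul, Real.norm_eq_abs, abs_of_pos (by positivity : (0:ℝ) < (M:ℝ)⁻¹)]
    rw [hnorm] at hω
    have hMpos : (0:ℝ) < M := by exact_mod_cast hM
    have hr2 : r ^ 2 < ‖S M ω‖ ^ 2 := by
      rw [hr_def]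
      have hxx : ((M:ℝ)⁻¹ * ‖S M ω‖) ^ 2 = ‖S M ω‖ ^ 2 / M ^ 2 := by
        field_simp
      rw [hxx] at hω
      rw [hRR'] at hω
      rw [div_mul_eq_mul_div, lt_div_iff₀ (by positivity)] at hω
      have heq : R' ^ 2 * (2 + x) ^ 2 / ↑M * (↑M:ℝ) ^ 2 = R' ^ 2 * (2 + x) ^ 2 * M := by
        field_simp
      rw [heq] at hω
      calc (sM * R' * (2 + x)) ^ 2 = sM ^ 2 * (R' ^ 2 * (2 + x) ^ 2) := by ring
        _ = R' ^ 2 * (2 + x) ^ 2 * M := by rw [hsM2]; ring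
        _ < ‖S M ω‖ ^ 2 := hω
    have : r < ‖S M ω‖ := lt_of_pow_lt_pow_left₀ 2 (norm_nonneg _) hr2
    exact Set.mem_setOf_eq ▸ this.le
  have hPc : P Evᶜ ≤ ENNReal.ofReal δ := by
    refine le_trans (measure_mono hsub) ?_
    rw [← ENNReal.ofReal_toReal (measure_ne_top P _)]
    exact ENNReal.ofReal_le_ofReal htail
  have hcompl : P Evᶜ = 1 - P Ev := by
    rw [measure_compl hEvMeas (measure_ne_top _ _), measure_univ]
  calc ENNReal.ofReal (1 - δ) = 1 - ENNReal.ofReal δ := by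
        rw [ENNReal.ofReal_sub _ hδ.le, ENNReal.ofReal_one]
    _ ≤ 1 - P Evᶜ := tsub_le_tsub_left hPc 1
    _ = 1 - (1 - P Ev) := by rw [hcompl]
    _ = P Ev := ENNReal.sub_sub_cancel ENNReal.one_ne_top prob_le_one
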